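/- Let ν = Uniform[0,t] × Uniform(0,1] and f(x,y) = (1/λ)·e^{−x}·log(1/y) for fixed λ > 0. Then ν(e^{−αf}) = (1/t)·log((λ + e^{−t}α)/(λ + α)) + 1 for α ≥ 0. -/

import Mathlib

open MeasureTheory Real

lemma inner_int (r : ℝ) (hr : 0 ≤ r) :
    ∫ y in (0:ℝ)..1, Real.exp (r * Real.log y) = 1 / (r + 1) := by
  have h : ∀ᵐ y ∂(volume : Measure ℝ), y ∈ Set.uIoc (0:ℝ) 1 →
      Real.exp (r * Real.log y) = y ^ r := by
    filter_upwards with y hy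
    rw [Set.uIoc_of_le zero_le_one] at hy
    rw [Real.rpow_def_of_pos hy.1, mul_comm]
  rw [intervalIntegral.integral_congr_ae h,
    integral_rpow (Or.inl (by linarith : (-1:ℝ) < r))]
  rw [Real.one_rpow, Real.zero_rpow (by linarith)]
  ring

/-- For `ν = Uniform[0,t] × Uniform(0,1]` and
`f(x,y) = (1/λ)·e^{−x}·log(1/y)` with `λ > 0`,
`ν(e^{−αf}) = (1/t)·log((λ + e^{−t}α)/(λ + α)) + 1` for `α ≥ 0`. -/
theorem stmt9 (t l α : ℝ) (ht : 0 < t) (hl : 0 < l) (hα : 0 ≤ α) :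
    (1 / t) * ∫ x in (0 : ℝ)..t, ∫ y in (0 : ℝ)..1,
        Real.exp (-(α * ((1 / l) * Real.exp (-x) * Real.log (1 / y))))
      = (1 / t) * Real.log ((l + Real.exp (-t) * α) / (l + α)) + 1 := by
  have hinner : ∀ x : ℝ,
      (∫ y in (0:ℝ)..1, Real.exp (-(α * ((1 / l) * Real.exp (-x) * Real.log (1 / y)))))
        = l / (l + α * Real.exp (-x)) := by
    intro x
    have hr : 0 ≤ α * Real.exp (-x) / l :=
      div_nonneg (mul_nonneg hα (Real.exp_pos _).le) hl.le
    have h2 : (∫ y in (0:ℝ)..1, Real.exp (-(α * ((1 / l) * Real.exp (-x) * Real.log (1 / y)))))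
        = ∫ y in (0:ℝ)..1, Real.exp ((α * Real.exp (-x) / l) * Real.log y) := by
      apply intervalIntegral.integral_congr_ae
      filter_upwards with y hy
      rw [Set.uIoc_of_le zero_le_one] at hy
      rw [one_div y, Real.log_inv]
      ring_nf
    rw [h2, inner_int _ hr]
    have hd : 0 < l + α * Real.exp (-x) :=
      lt_of_lt_of_le hl (by nlinarith [Real.exp_pos (-x), mul_nonneg hα (Real.exp_pos (-x)).le])
    field_simp
    ring
  simp_rw [hinner]
  have hpos : ∀ x : ℝ, 0 < l * Real.exp x + α := fun x =>
    lt_of_lt_of_le (mul_pos hl (Real.exp_pos x)) (le_add_of_nonneg_right hα)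
  have hderiv : ∀ x ∈ Set.uIcc (0:ℝ) t, HasDerivAt (fun x => Real.log (l * Real.exp x + α))
      (l / (l + α * Real.exp (-x))) x := by
    intro x _
    have h1 : HasDerivAt (fun x => l * Real.exp x + α) (l * Real.exp x) x :=
      ((Real.hasDerivAt_exp x).const_mul l).add_const α
    have h2 := h1.log (ne_of_gt (hpos x))
    convert h2 using 1
    have he : Real.exp x > 0 := Real.exp_pos x
    rw [Real.exp_neg]
    field_simp
  have hcont : IntervalIntegrable (fun x => l / (l + α * Real.exp (-x))) volume 0 t := by
    apply Continuous.intervalIntegrable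
    apply continuous_const.div (by continuity)
    intro x
    have : 0 < l + α * Real.exp (-x) :=
      lt_of_lt_of_le hl (le_add_of_nonneg_right (mul_nonneg hα (Real.exp_pos _).le))
    exact ne_of_gt this
  rw [intervalIntegral.integral_eq_sub_of_hasDerivAt hderiv hcont]
  have h0 : l * Real.exp 0 + α = l + α := by simp
  have ht' : l * Real.exp t + α = Real.exp t * (l + Real.exp (-t) * α) := by
    rw [Real.exp_neg]
    field_simp
  rw [h0, ht', Real.log_mul (ne_of_gt (Real.exp_pos t))
    (ne_of_gt (lt_of_lt_of_le hl (le_add_of_nonneg_right (mul_nonneg (Real.exp_pos _).le hα)))),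
    Real.log_exp,
    Real.log_div (ne_of_gt (lt_of_lt_of_le hl (le_add_of_nonneg_right (mul_nonneg (Real.exp_pos _).le hα))))
      (ne_of_gt (lt_of_lt_of_le hl (le_add_of_nonneg_right hα)))]
  field_simp
  ring
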